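/- A lifted action of a uniformly perfect group on the real line has a global fixed point: if G is a group such that every element of G is a product of at most N commutators for some fixed N : ℕ, and ρ : G →* CircleDeg1Liftˣ is any group homomorphism into the group of invertible degree-one monotone circle lifts, then there exists x ∈ ℝ with (ρ g)(x) = x for every g ∈ G. -/

import Mathlib

open scoped commutatorElement

open CircleDeg1Lift

/-- Subadditivity-type bound for translation numbers. -/
lemma tau_mul_le (f g : CircleDeg1Lift) :
    (f * g).translationNumber ≤ f.translationNumber + g.translationNumber + 2 := by
  apply translationNumber_le_of_le_add
  intro x
  calc (f * g) x = f (g x) := rfl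
    _ ≤ g x + f.translationNumber + 1 := (f.map_lt_add_translationNumber_add_one (g x)).le
    _ ≤ (x + g.translationNumber + 1) + f.translationNumber + 1 := by
        have := (g.map_lt_add_translationNumber_add_one x).le
        linarith
    _ = x + (f.translationNumber + g.translationNumber + 2) := by ring

lemma tau_commutator_le (a b : CircleDeg1Liftˣ) :
    ((⁅a, b⁆ : CircleDeg1Liftˣ) : CircleDeg1Lift).translationNumber ≤ 2 := by
  have h1 : ((⁅a, b⁆ : CircleDeg1Liftˣ) : CircleDeg1Lift) =
      ((a : CircleDeg1Lift) * b * ↑a⁻¹) * ↑b⁻¹ := by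
    simp [commutatorElement_def, mul_assoc]
  have h2 : ((a : CircleDeg1Lift) * b * ↑a⁻¹).translationNumber =
      (b : CircleDeg1Lift).translationNumber := translationNumber_conj_eq a b
  have h3 : ((b⁻¹ : CircleDeg1Liftˣ) : CircleDeg1Lift).translationNumber =
      -(b : CircleDeg1Lift).translationNumber := translationNumber_units_inv b
  have := tau_mul_le ((a : CircleDeg1Lift) * b * ↑a⁻¹) ↑b⁻¹
  rw [h2, h3] at this
  rw [h1]
  linarith

lemma commutator_apply_le (a b : CircleDeg1Liftˣ) (x : ℝ) :
    ((⁅a, b⁆ : CircleDeg1Liftˣ) : CircleDeg1Lift) x ≤ x + 3 := by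
  have h := map_lt_add_translationNumber_add_one
    ((⁅a, b⁆ : CircleDeg1Liftˣ) : CircleDeg1Lift) x
  have := tau_commutator_le a b
  linarith

lemma list_prod_apply_le (l : List CircleDeg1Liftˣ)
    (h : ∀ f ∈ l, ∀ x : ℝ, (f : CircleDeg1Lift) x ≤ x + 3) (x : ℝ) :
    ((l.prod : CircleDeg1Liftˣ) : CircleDeg1Lift) x ≤ x + 3 * l.length := by
  induction l generalizing x with
  | nil => simp
  | cons f t ih =>
    have hf : ∀ y : ℝ, (f : CircleDeg1Lift) y ≤ y + 3 := h f List.mem_cons_self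
    have ht : ((t.prod : CircleDeg1Liftˣ) : CircleDeg1Lift) x ≤ x + 3 * t.length :=
      ih (fun g hg => h g (List.mem_cons_of_mem f hg)) x
    have : ((List.prod (f :: t) : CircleDeg1Liftˣ) : CircleDeg1Lift) x
        = (f : CircleDeg1Lift) (((t.prod : CircleDeg1Liftˣ) : CircleDeg1Lift) x) := by
      simp [List.prod_cons, CircleDeg1Lift.mul_apply]
    rw [this]
    calc (f : CircleDeg1Lift) (((t.prod : CircleDeg1Liftˣ) : CircleDeg1Lift) x)
        ≤ ((t.prod : CircleDeg1Liftˣ) : CircleDeg1Lift) x + 3 := hf _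
      _ ≤ x + 3 * t.length + 3 := by linarith
      _ = x + 3 * (t.length + 1) := by ring
      _ = x + 3 * (List.length (f :: t)) := by rw [List.length_cons]; push_cast; ring

/-- A lifted action of a uniformly perfect group on the real line has a global
fixed point. -/
theorem lifted_action_of_uniformly_perfect_has_fixed_point
    {G : Type*} [Group G] (N : ℕ)
    (hperf : ∀ g : G, ∃ l : List (G × G), l.length ≤ N ∧
      g = (l.map fun p => ⁅p.1, p.2⁆).prod)
    (ρ : G →* CircleDeg1Liftˣ) :
    ∃ x : ℝ, ∀ g : G, ((ρ g : CircleDeg1Liftˣ) : CircleDeg1Lift) x = x := by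
  -- uniform bound: every `ρ g` moves points at most `3 * N` to the right
  have key : ∀ (g : G) (x : ℝ), ((ρ g : CircleDeg1Liftˣ) : CircleDeg1Lift) x ≤ x + 3 * N := by
    intro g x
    obtain ⟨l, hlen, hg⟩ := hperf g
    have hρ : ρ g = (l.map fun p => ⁅ρ p.1, ρ p.2⁆).prod := by
      rw [hg, ← List.prod_hom _ ρ]
      congr 1
      simp only [List.map_map, Function.comp_def]
      exact List.map_congr_left fun p _ => map_commutatorElement ρ p.1 p.2
    have hb := list_prod_apply_le (l.map fun p => ⁅ρ p.1, ρ p.2⁆)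
      (by
        intro f hf x
        simp only [List.mem_map] at hf
        obtain ⟨p, -, rfl⟩ := hf
        exact commutator_apply_le _ _ x) x
    rw [hρ]
    refine hb.trans ?_
    have : ((l.map fun p => ⁅ρ p.1, ρ p.2⁆).length : ℝ) ≤ N := by
      simpa using (Nat.cast_le.mpr hlen : (l.length : ℝ) ≤ N)
    linarith
  set S : Set ℝ := Set.range fun g : G => ((ρ g : CircleDeg1Liftˣ) : CircleDeg1Lift) 0 with hS
  have hne : S.Nonempty := ⟨_, ⟨1, rfl⟩⟩
  have hbdd : BddAbove S := by
    refine ⟨3 * N, ?_⟩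
    rintro y ⟨g, rfl⟩
    simpa using key g 0
  set x := sSup S with hx
  have hle : ∀ h : G, x ≤ ((ρ h : CircleDeg1Liftˣ) : CircleDeg1Lift) x := by
    intro h
    refine csSup_le hne ?_
    rintro y ⟨g, rfl⟩
    have h1 : ((ρ (h⁻¹ * g) : CircleDeg1Liftˣ) : CircleDeg1Lift) 0 ≤ x :=
      le_csSup hbdd ⟨h⁻¹ * g, rfl⟩
    have h2 := ((ρ h : CircleDeg1Liftˣ) : CircleDeg1Lift).mono h1
    calc ((ρ g : CircleDeg1Liftˣ) : CircleDeg1Lift) 0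
        = ((ρ h : CircleDeg1Liftˣ) : CircleDeg1Lift)
            (((ρ (h⁻¹ * g) : CircleDeg1Liftˣ) : CircleDeg1Lift) 0) := by
          rw [← CircleDeg1Lift.mul_apply, ← Units.val_mul, ← map_mul]
          simp
      _ ≤ ((ρ h : CircleDeg1Liftˣ) : CircleDeg1Lift) x := h2
  refine ⟨x, fun g => ?_⟩
  have h1 := hle g
  have h2 := hle g⁻¹
  have h3 := ((ρ g : CircleDeg1Liftˣ) : CircleDeg1Lift).mono h2
  have h4 : ((ρ g : CircleDeg1Liftˣ) : CircleDeg1Lift)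
      (((ρ g⁻¹ : CircleDeg1Liftˣ) : CircleDeg1Lift) x) = x := by
    rw [← CircleDeg1Lift.mul_apply, ← Units.val_mul, ← map_mul]
    simp
  rw [h4] at h3
  exact le_antisymm h3 h1
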